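/- Let D = diag(1, e^{iφ}) be a diagonal single-qubit unitary, let |ψ⟩ ∈ ℂ² be any vector, and let x ∈ {0,1}. Then the X-teleportation circuit identity holds: (⟨x| H D ⊗ I₂) · CZ · (|ψ⟩ ⊗ |+⟩) = 2^{−1/2} · H Z^x D |ψ⟩. In particular, if ‖ψ‖ = 1 then each measurement outcome x occurs with probability ‖(⟨x|HD ⊗ I₂) CZ (|ψ⟩⊗|+⟩)‖² = 1/2, and the post-measurement state of the second qubit is proportional to H Z^x D |ψ⟩. -/

import Mathlib

noncomputable section

/-- The Hadamard gate `H = (1/√2)((1,1),(1,−1))` on one qubit. -/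
def Hgate : Matrix (Fin 2) (Fin 2) ℂ :=
  (((Real.sqrt 2)⁻¹ : ℝ) : ℂ) • !![1, 1; 1, -1]

/-- The Pauli-Z gate `Z = diag(1,−1)` on one qubit. -/
def Zgate : Matrix (Fin 2) (Fin 2) ℂ := !![1, 0; 0, -1]

/-- The diagonal single-qubit unitary `D = diag(1, e^{iφ})`. -/
def Dgate (φ : ℝ) : Matrix (Fin 2) (Fin 2) ℂ :=
  !![1, 0; 0, Complex.exp (Complex.I * φ)]

/-- The controlled-Z gate `CZ = diag(1,1,1,−1)` on two qubits. -/
def CZ2 : Matrix (Fin 2 × Fin 2) (Fin 2 × Fin 2) ℂ :=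
  Matrix.diagonal fun p => if p.1 = 1 ∧ p.2 = 1 then -1 else 1

/-- The state `|+⟩ = (|0⟩ + |1⟩)/√2` on one qubit. -/
def plusState : Fin 2 → ℂ := fun _ => (((Real.sqrt 2)⁻¹ : ℝ) : ℂ)

/-- The (unnormalized) state of the second qubit after the `X`-teleportation gadget:
apply `CZ` to `|ψ⟩ ⊗ |+⟩`, then apply `⟨x| H D ⊗ I₂`, i.e. measure the first qubit
in the `D†XD` basis with outcome `x`. -/
def teleported (φ : ℝ) (ψ : Fin 2 → ℂ) (x : Fin 2) : Fin 2 → ℂ := fun j =>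
  ∑ i : Fin 2, (Hgate * Dgate φ) x i * (CZ2.mulVec fun p => ψ p.1 * plusState p.2) (i, j)

lemma paral_aux (a b : ℂ) :
    Complex.normSq (a + b) + Complex.normSq (a - b)
      = 2 * (Complex.normSq a + Complex.normSq b) := by
  simp [Complex.normSq_apply]; ring

/-- **The `X`-teleportation circuit identity.**
For `D = diag(1, e^{iφ})`, any `|ψ⟩ ∈ ℂ²` and any outcome `x ∈ {0,1}`,
`(⟨x| H D ⊗ I₂) · CZ · (|ψ⟩ ⊗ |+⟩) = 2^{−1/2} · H Z^x D |ψ⟩`; in particular the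
post-measurement state of the second qubit is proportional to `H Z^x D |ψ⟩`, and if
`‖ψ‖ = 1` then each measurement outcome `x` occurs with probability
`‖(⟨x|HD ⊗ I₂) CZ (|ψ⟩⊗|+⟩)‖² = 1/2`. -/
theorem x_teleportation (φ : ℝ) (ψ : Fin 2 → ℂ) (x : Fin 2) :
    teleported φ ψ x =
        (((Real.sqrt 2)⁻¹ : ℝ) : ℂ) • (Hgate * Zgate ^ (x : ℕ) * Dgate φ).mulVec ψ ∧
      ((∑ i : Fin 2, ‖ψ i‖ ^ 2 = 1) →
        ∑ j : Fin 2, ‖teleported φ ψ x j‖ ^ 2 = 1 / 2) := by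
  have h1 : teleported φ ψ x =
      (((Real.sqrt 2)⁻¹ : ℝ) : ℂ) • (Hgate * Zgate ^ (x : ℕ) * Dgate φ).mulVec ψ := by
    funext j
    fin_cases x <;> fin_cases j <;>
      simp [teleported, Hgate, Dgate, Zgate, CZ2, plusState, Matrix.mul_apply,
        Matrix.mulVec, dotProduct, Matrix.mulVec_diagonal, Fin.sum_univ_two,
        pow_succ, Fin.isValue, Matrix.diagonal_apply] <;>
      ring
  refine ⟨h1, fun hψ => ?_⟩
  set c : ℂ := (((Real.sqrt 2)⁻¹ : ℝ) : ℂ) with hcdef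
  have hc : Complex.normSq c = 1/2 := by
    rw [hcdef, Complex.normSq_ofReal]
    rw [← mul_inv, Real.mul_self_sqrt (by norm_num : (0:ℝ) ≤ 2)]
    norm_num
  have he : Complex.normSq (Complex.exp (Complex.I * φ)) = 1 := by
    rw [← Complex.sq_norm, Complex.norm_exp]
    simp
  set a := ψ 0
  set b := Complex.exp (Complex.I * φ) * ψ 1 with hbdef
  have hb : Complex.normSq b = Complex.normSq (ψ 1) := by
    rw [hbdef, map_mul, he, one_mul]
  have hψ' : Complex.normSq a + Complex.normSq (ψ 1) = 1 := by
    simpa [← Complex.sq_norm, Fin.sum_univ_two] using hψ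
  have hform : (teleported φ ψ x 0 = c * (c * (a + (-1:ℂ)^(x:ℕ) * b)) ∧
      teleported φ ψ x 1 = c * (c * (a - (-1:ℂ)^(x:ℕ) * b))) := by
    rw [h1]
    fin_cases x <;>
      constructor <;>
      · simp [Hgate, Dgate, Zgate, Matrix.mul_apply, Matrix.mulVec, dotProduct,
          Fin.sum_univ_two, pow_succ, hbdef]
        left
        rw [hcdef]
        push_cast
        ring
  have hpar := paral_aux a ((-1:ℂ)^(x:ℕ) * b)
  have hsb : Complex.normSq ((-1:ℂ)^(x:ℕ) * b) = Complex.normSq b := by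
    fin_cases x <;> simp
  rw [Fin.sum_univ_two, hform.1, hform.2]
  simp only [← Complex.sq_norm, Complex.sq_norm] at *
  rw [map_mul, map_mul, map_mul, map_mul, hc]
  rw [hsb] at hpar
  rw [hb] at hpar
  linarith
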